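/- Let K be a skew field with a spherically complete valuation ν, let V be a finite-dimensional right K-vector space, let m > 0 be a real constant, and let ω : V → ℝ ∪ {∞} satisfy: (1) ω(x) = ∞ iff x = 0; (2) ω(x·l) = ω(x) + m·ν(l) for all x ∈ V and l ∈ K; (3) ω(−x) = ω(x) and ω(x + y) ≥ min(ω(x), ω(y)) for all x, y ∈ V. Then the metric space (V, d) with d(x,y) := 2^{−ω(x−y)} satisfies (MC′). -/

import Mathlib

/-- `2 ^ (-a)` for `a ∈ ℝ ∪ {∞}`, with the convention `2 ^ (-∞) = 0`. -/
noncomputable def toDist (a : WithTop ℝ) : ℝ :=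
  WithTop.recTopCoe 0 (fun r : ℝ => (2 : ℝ) ^ (-r)) a

/-- Property (MC′) for a distance function `d` on `X`: every nested sequence of c-balls
(closed balls of positive radius) has nonempty intersection. -/
def MCprime {X : Type*} (d : X → X → ℝ) : Prop :=
  ∀ (c : ℕ → X) (r : ℕ → ℝ),
    (∀ n, 0 < r n) →
    (∀ n, {y | d (c (n + 1)) y ≤ r (n + 1)} ⊆ {y | d (c n) y ≤ r n}) →
    (⋂ n, {y | d (c n) y ≤ r n}).Nonempty

lemma toDist_top : toDist ⊤ = 0 := rfl
lemma toDist_coe (r : ℝ) : toDist (r : WithTop ℝ) = (2:ℝ) ^ (-r) := rfl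

lemma toDist_nonneg (a : WithTop ℝ) : 0 ≤ toDist a := by
  induction a using WithTop.recTopCoe with
  | top => simp [toDist_top]
  | coe r => exact (Real.rpow_pos_of_pos two_pos _).le

lemma toDist_pos (a : WithTop ℝ) (h : a ≠ ⊤) : 0 < toDist a := by
  induction a using WithTop.recTopCoe with
  | top => exact absurd rfl h
  | coe r => exact Real.rpow_pos_of_pos two_pos _

lemma toDist_le_iff (a b : WithTop ℝ) : toDist a ≤ toDist b ↔ b ≤ a := by
  induction a using WithTop.recTopCoe with
  | top =>
    simp only [toDist_top, le_top, iff_true]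
    exact toDist_nonneg b
  | coe r =>
    induction b using WithTop.recTopCoe with
    | top =>
      simp only [toDist_top, top_le_iff]
      constructor
      · intro h; exact absurd h (not_le.mpr (Real.rpow_pos_of_pos two_pos _))
      · intro h; exact absurd h (by simp)
    | coe s =>
      rw [toDist_coe, toDist_coe, Real.rpow_le_rpow_left_iff one_lt_two,
        neg_le_neg_iff, WithTop.coe_le_coe]

lemma toDist_mono {a b : WithTop ℝ} (h : a ≤ b) : toDist b ≤ toDist a :=
  (toDist_le_iff b a).mpr h

lemma toDist_shift {γ m : ℝ} (hm : 0 < m) (x : WithTop ℝ) {r : ℝ} (hr : 0 < r) :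
    toDist ((γ : WithTop ℝ) + (m : WithTop ℝ) * x) ≤ r ↔
      toDist x ≤ (r * (2:ℝ) ^ γ) ^ (m⁻¹) := by
  have hs : (0:ℝ) < (r * (2:ℝ) ^ γ) ^ (m⁻¹) :=
    Real.rpow_pos_of_pos (mul_pos hr (Real.rpow_pos_of_pos two_pos _)) _
  induction x using WithTop.recTopCoe with
  | top =>
    rw [WithTop.mul_top (by exact_mod_cast hm.ne'), add_top, toDist_top]
    simp [hr.le, hs.le, toDist_top]
  | coe s =>
    have h1 : (γ : WithTop ℝ) + (m : WithTop ℝ) * (s : WithTop ℝ) = ((γ + m * s : ℝ) : WithTop ℝ) := by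
      push_cast; ring
    rw [h1, toDist_coe, toDist_coe,
      Real.le_rpow_inv_iff_of_pos (Real.rpow_pos_of_pos two_pos _).le
        (mul_pos hr (Real.rpow_pos_of_pos two_pos _)).le hm,
      ← Real.rpow_mul (by norm_num : (0:ℝ) ≤ 2)]
    have h2 : (2:ℝ) ^ (-(γ + m * s)) = ((2:ℝ) ^ γ)⁻¹ * (2:ℝ) ^ (-s * m) := by
      rw [← Real.rpow_neg (by norm_num : (0:ℝ) ≤ 2) γ,
        ← Real.rpow_add (by norm_num : (0:ℝ) < 2)]
      ring_nf
    rw [h2, inv_mul_le_iff₀ (Real.rpow_pos_of_pos two_pos _), mul_comm ((2:ℝ) ^ γ) r]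

section Ultra
variable {V : Type*} [AddCommGroup V] (ω : V → WithTop ℝ)
  (hω1 : ∀ x : V, ω x = ⊤ ↔ x = 0)
  (hω3neg : ∀ x : V, ω (-x) = ω x)
  (hω3 : ∀ x y : V, min (ω x) (ω y) ≤ ω (x + y))

include hω3 in
lemma ultra (x y z : V) :
    toDist (ω (x - z)) ≤ max (toDist (ω (x - y))) (toDist (ω (y - z))) := by
  have h : min (ω (x - y)) (ω (y - z)) ≤ ω (x - z) := by
    have := hω3 (x - y) (y - z)
    rwa [sub_add_sub_cancel] at this
  rcases le_total (ω (x - y)) (ω (y - z)) with hc | hc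
  · rw [min_eq_left hc] at h
    exact le_max_of_le_left (toDist_mono h)
  · rw [min_eq_right hc] at h
    exact le_max_of_le_right (toDist_mono h)

include hω3neg in
lemma omega_sub_comm (x y : V) : ω (x - y) = ω (y - x) := by
  rw [← hω3neg (x - y), neg_sub]

end Ultra

lemma best_approx {K V : Type*} [DivisionRing K] [AddCommGroup V] [Module Kᵐᵒᵖ V]
    (ω : V → WithTop ℝ)
    (hω1 : ∀ x : V, ω x = ⊤ ↔ x = 0)
    (hω3neg : ∀ x : V, ω (-x) = ω x)
    (hω3 : ∀ x y : V, min (ω x) (ω y) ≤ ω (x + y))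
    (U : Submodule Kᵐᵒᵖ V)
    (hU : MCprime (fun x y : ↥U => toDist (ω ((x : V) - (y : V)))))
    (v : V) : ∃ u₀ ∈ U, ∀ u ∈ U, ω (v - u) ≤ ω (v - u₀) := by
  by_cases hv : v ∈ U
  · exact ⟨v, hv, fun u hu => by rw [sub_self, (hω1 (0:V)).mpr rfl]; exact le_top⟩
  set f : ↥U → ℝ := fun u => toDist (ω (v - (u : V))) with hf
  have hfpos : ∀ u : ↥U, 0 < f u := by
    intro u
    refine toDist_pos _ (fun h => hv ?_)
    have : v - (u : V) = 0 := (hω1 _).mp h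
    have : v = (u : V) := by rwa [sub_eq_zero] at this
    rw [this]; exact u.2
  have hbdd : BddBelow (Set.range f) := ⟨0, by rintro x ⟨u, rfl⟩; exact (hfpos u).le⟩
  set D : ℝ := ⨅ u : ↥U, f u with hD
  by_contra hno
  have hDlt : ∀ u : ↥U, D < f u := by
    intro u
    rcases lt_or_eq_of_le (ciInf_le hbdd u) with h | h
    · exact h
    · exfalso; apply hno
      refine ⟨u, u.2, fun w hw => ?_⟩
      have : f u ≤ f ⟨w, hw⟩ := h ▸ ciInf_le hbdd ⟨w, hw⟩
      exact (toDist_le_iff _ _).mp this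
  have key : ∀ (u : ↥U) (ε : ℝ), 0 < ε → ∃ u' : ↥U, f u' < min (f u) (D + ε) := by
    intro u ε hε
    exact exists_lt_of_ciInf_lt (lt_min (hDlt u) (by linarith))
  choose g hg using fun (u : ↥U) (n : ℕ) =>
    key u (1 / (n + 1)) (by positivity)
  set c : ℕ → ↥U := fun n => Nat.rec ⟨0, U.zero_mem⟩ (fun n u => g u n) n with hc
  have hcsucc : ∀ n, c (n + 1) = g (c n) n := fun n => rfl
  have hcdec : ∀ n, f (c (n + 1)) < f (c n) := by
    intro n; rw [hcsucc n]; exact (lt_min_iff.mp (hg (c n) n)).1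
  have hcD : ∀ n, f (c (n + 1)) < D + 1 / (n + 1) := by
    intro n; rw [hcsucc n]; exact (lt_min_iff.mp (hg (c n) n)).2
  set r : ℕ → ℝ := fun n => f (c n) with hr
  have hnest : ∀ n, {y : ↥U | toDist (ω ((c (n+1) : V) - (y : V))) ≤ r (n+1)} ⊆
      {y : ↥U | toDist (ω ((c n : V) - (y : V))) ≤ r n} := by
    intro n y hy
    have h1 : toDist (ω ((c n : V) - (c (n+1) : V))) ≤ r n := by
      refine le_trans (ultra ω hω3 _ v _) (max_le ?_ ?_)
      · rw [omega_sub_comm ω hω3neg]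
      · exact le_of_lt (hcdec n)
    refine le_trans (ultra ω hω3 _ (c (n+1) : V) _) (max_le h1 ?_)
    exact le_trans hy (le_of_lt (hcdec n))
  obtain ⟨u, hu⟩ := hU c r (fun n => hfpos _) hnest
  have hun : ∀ n, toDist (ω ((c n : V) - (u : V))) ≤ r n := by
    intro n
    have := Set.mem_iInter.mp hu n
    exact this
  have hfu : ∀ n, f u ≤ r n := by
    intro n
    exact le_trans (ultra ω hω3 v (c n : V) (u : V)) (max_le (le_refl _) (hun n))
  have hfuD : f u ≤ D := by
    by_contra h
    push_neg at h
    obtain ⟨n, hn⟩ := exists_nat_one_div_lt (show 0 < f u - D by linarith)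
    have := lt_of_le_of_lt (hfu (n + 1)) (hcD n)
    rw [show ((n:ℝ) + 1) = ((n:ℕ) + 1 : ℝ) by norm_num] at hn
    linarith
  exact absurd (hDlt u) (not_lt.mpr hfuD)

set_option maxHeartbeats 1000000 in
open MulOpposite in
lemma aux_findim (n : ℕ) : ∀ {K V : Type*} [DivisionRing K] [AddCommGroup V] [Module Kᵐᵒᵖ V]
    [FiniteDimensional Kᵐᵒᵖ V], Module.finrank Kᵐᵒᵖ V = n →
    ∀ (ν : K → WithTop ℝ),
    (∀ x : K, ν x = ⊤ ↔ x = 0) →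
    MCprime (fun x y : K => toDist (ν (x - y))) →
    ∀ (m : ℝ), 0 < m →
    ∀ (ω : V → WithTop ℝ),
    (∀ x : V, ω x = ⊤ ↔ x = 0) →
    (∀ (x : V) (l : K), ω (MulOpposite.op l • x) = ω x + (m : WithTop ℝ) * ν l) →
    (∀ x : V, ω (-x) = ω x) →
    (∀ x y : V, min (ω x) (ω y) ≤ ω (x + y)) →
    MCprime (fun x y : V => toDist (ω (x - y))) := by
  induction n with
  | zero =>
    intro K V _ _ _ _ hn ν hν1 hνsph m hm ω hω1 hω2 hω3neg hω3
    intro c r hr hnest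
    have : Subsingleton V := Module.finrank_zero_iff.mp hn
    refine ⟨c 0, Set.mem_iInter.mpr fun k => ?_⟩
    have h0 : c k - c 0 = 0 := Subsingleton.elim _ _
    show toDist (ω (c k - c 0)) ≤ r k
    rw [h0, (hω1 (0:V)).mpr rfl, toDist_top]
    exact (hr k).le
  | succ n IH =>
    intro K V _ _ _ _ hn ν hν1 hνsph m hm ω hω1 hω2 hω3neg hω3
    intro c r hr hnest
    classical
    set b : Module.Basis (Fin (n+1)) Kᵐᵒᵖ V := Module.finBasisOfFinrankEq Kᵐᵒᵖ V hn with hb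
    set e : V := b 0 with he
    set U : Submodule Kᵐᵒᵖ V := Submodule.span Kᵐᵒᵖ (Set.range (b ∘ Fin.succ)) with hU
    have hUrank : Module.finrank Kᵐᵒᵖ ↥U = n := by
      rw [hU, finrank_span_eq_card (b.linearIndependent.comp Fin.succ (Fin.succ_injective n))]
      simp
    -- MCprime for U
    have hMCU : MCprime (fun x y : ↥U => toDist (ω ((x : V) - (y : V)))) := by
      have h := IH hUrank ν hν1 hνsph m hm (fun x : ↥U => ω (x : V))
        (fun x => by
          show ω (x : V) = ⊤ ↔ x = 0
          rw [hω1]; exact ZeroMemClass.coe_eq_zero)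
        (fun x l => by
          show ω ((op l • x : ↥U) : V) = ω (x : V) + (m : WithTop ℝ) * ν l
          rw [Submodule.coe_smul]; exact hω2 _ _)
        (fun x => by
          show ω ((-x : ↥U) : V) = ω (x : V)
          rw [Submodule.coe_neg]; exact hω3neg _)
        (fun x y => by
          show min (ω (x : V)) (ω (y : V)) ≤ ω ((x + y : ↥U) : V)
          rw [Submodule.coe_add]; exact hω3 _ _)
      have heq : (fun x y : ↥U => toDist ((fun x : ↥U => ω (x : V)) (x - y))) =
          fun x y : ↥U => toDist (ω ((x : V) - (y : V))) := by
        funext x y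
        show toDist (ω ((x - y : ↥U) : V)) = toDist (ω ((x : V) - (y : V)))
        rw [Submodule.coe_sub]
      rwa [heq] at h
    set φ : V →ₗ[Kᵐᵒᵖ] Kᵐᵒᵖ := b.coord 0 with hφ
    have hφe : φ e = 1 := by
      rw [hφ, he, Module.Basis.coord_apply, Module.Basis.repr_self, Finsupp.single_eq_same]
    have hφU : ∀ u ∈ U, φ u = 0 := by
      have hle : U ≤ LinearMap.ker φ := by
        rw [hU, Submodule.span_le]
        rintro _ ⟨i, rfl⟩
        simp only [Function.comp_apply, SetLike.mem_coe, LinearMap.mem_ker, hφ,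
          Module.Basis.coord_apply, Module.Basis.repr_self]
        exact Finsupp.single_eq_of_ne (Fin.succ_ne_zero i).symm
      intro u hu
      exact LinearMap.mem_ker.mp (hle hu)
    have hmem : ∀ v : V, v - φ v • e ∈ U := by
      intro v
      have hrepr := b.sum_repr v
      rw [Fin.sum_univ_succ] at hrepr
      have hvv : v - φ v • e = ∑ i : Fin n, b.repr v i.succ • b i.succ := by
        rw [hφ, Module.Basis.coord_apply, he]
        exact sub_eq_of_eq_add' hrepr.symm
      rw [hvv]
      exact Submodule.sum_mem _ fun i _ =>
        Submodule.smul_mem _ _ (Submodule.subset_span ⟨i, rfl⟩)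
    have heU : e ∉ U := fun h => one_ne_zero (hφe ▸ hφU e h)
    obtain ⟨u₀, hu₀U, hu₀⟩ := best_approx ω hω1 hω3neg hω3 U hMCU e
    have he0 : e - u₀ ≠ 0 := fun h => heU (by rw [sub_eq_zero] at h; rw [h]; exact hu₀U)
    obtain ⟨γr, hγ⟩ := WithTop.ne_top_iff_exists.mp (fun h => he0 ((hω1 _).mp h))
    -- hγ : (γr : WithTop ℝ) = ω (e - u₀)
    -- attained value of the "quotient norm"
    have QA : ∀ v : V, ∃ u ∈ U, ω (v - u) =
        (γr : WithTop ℝ) + (m : WithTop ℝ) * ν (φ v).unop := by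
      intro v
      refine ⟨v - φ v • e + φ v • u₀,
        U.add_mem (hmem v) (U.smul_mem _ hu₀U), ?_⟩
      have hx : v - (v - φ v • e + φ v • u₀) = φ v • (e - u₀) := by
        rw [smul_sub]; abel
      rw [hx]
      have h2 := hω2 (e - u₀) (φ v).unop
      rw [op_unop] at h2
      rw [h2, ← hγ]
    have QM : ∀ v : V, ∀ u ∈ U, ω (v - u) ≤
        (γr : WithTop ℝ) + (m : WithTop ℝ) * ν (φ v).unop := by
      intro v u hu
      by_cases h0 : φ v = 0
      · rw [h0, show ((0 : Kᵐᵒᵖ).unop) = (0 : K) from rfl, (hν1 (0:K)).mpr rfl,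
          WithTop.mul_top (by exact_mod_cast hm.ne' : (m : WithTop ℝ) ≠ 0), add_top]
        exact le_top
      · have hwU : (φ v)⁻¹ • (u - (v - φ v • e)) ∈ U :=
          U.smul_mem _ (U.sub_mem hu (hmem v))
        have hvu : v - u = φ v • (e - (φ v)⁻¹ • (u - (v - φ v • e))) := by
          rw [smul_sub, smul_inv_smul₀ h0]
          abel
        rw [hvu]
        have h2 := hω2 (e - (φ v)⁻¹ • (u - (v - φ v • e))) (φ v).unop
        rw [op_unop] at h2
        rw [h2]
        exact add_le_add_left (le_trans (hu₀ _ hwU) (le_of_eq hγ.symm)) _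
    -- transfer to K-balls
    set s : ℕ → ℝ := fun k => (r k * (2:ℝ) ^ γr) ^ (m⁻¹) with hs
    have hspos : ∀ k, 0 < s k := fun k =>
      Real.rpow_pos_of_pos (mul_pos (hr k) (Real.rpow_pos_of_pos two_pos _)) _
    have hL4 : ∀ (x : WithTop ℝ) (k : ℕ),
        toDist ((γr : WithTop ℝ) + (m : WithTop ℝ) * x) ≤ r k ↔ toDist x ≤ s k :=
      fun x k => toDist_shift hm x (hr k)
    set a : ℕ → K := fun k => (φ (c k)).unop with ha
    have hφsub : ∀ (k : ℕ) (y : K), (φ (c k - op y • e)).unop = a k - y := by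
      intro k y
      rw [map_sub, map_smul, hφe, smul_eq_mul, mul_one, ha]
      rfl
    have hKnest : ∀ k, {y : K | toDist (ν (a (k+1) - y)) ≤ s (k+1)} ⊆
        {y : K | toDist (ν (a k - y)) ≤ s k} := by
      intro k y hy
      obtain ⟨u', hu'U, hu'⟩ := QA (c (k+1) - op y • e)
      rw [hφsub] at hu'
      have hz1 : toDist (ω (c (k+1) - (op y • e + u'))) ≤ r (k+1) := by
        have hc1 : c (k+1) - (op y • e + u') = (c (k+1) - op y • e) - u' := by abel
        rw [hc1, hu']
        exact (hL4 _ (k+1)).mpr hy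
      have hz2 : toDist (ω (c k - (op y • e + u'))) ≤ r k := hnest k hz1
      have h3 : toDist ((γr : WithTop ℝ) + (m : WithTop ℝ) * ν (a k - y)) ≤ r k := by
        refine le_trans (toDist_mono ?_) hz2
        have hc2 : c k - (op y • e + u') = (c k - op y • e) - u' := by abel
        rw [hc2, ← hφsub k y]
        exact QM _ _ hu'U
      exact (hL4 _ k).mp h3
    obtain ⟨t, ht⟩ := hνsph a s hspos hKnest
    have htk : ∀ k, toDist (ν (a k - t)) ≤ s k := fun k => Set.mem_iInter.mp ht k
    -- choose best approximations
    choose uu huuU huuval using fun k => QA (c k - op t • e)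
    have huuval' : ∀ k, ω ((c k - op t • e) - uu k) =
        (γr : WithTop ℝ) + (m : WithTop ℝ) * ν (a k - t) := fun k => by
      rw [huuval k, hφsub k t]
    have hdk : ∀ k, toDist (ω (c k - (op t • e + uu k))) ≤ r k := by
      intro k
      have hc1 : c k - (op t • e + uu k) = (c k - op t • e) - uu k := by abel
      rw [hc1, huuval' k]
      exact (hL4 _ k).mpr (htk k)
    set cu : ℕ → ↥U := fun k => ⟨uu k, huuU k⟩ with hcu
    have hUnest : ∀ k, {y : ↥U | toDist (ω ((cu (k+1) : V) - (y : V))) ≤ r (k+1)} ⊆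
        {y : ↥U | toDist (ω ((cu k : V) - (y : V))) ≤ r k} := by
      intro k y hy
      have hy' : toDist (ω (uu (k+1) - (y : V))) ≤ r (k+1) := hy
      have h1 : toDist (ω (c (k+1) - (op t • e + (y : V)))) ≤ r (k+1) := by
        refine le_trans (ultra ω hω3 _ (op t • e + uu (k+1)) _) (max_le (hdk (k+1)) ?_)
        have hc1 : op t • e + uu (k+1) - (op t • e + (y : V)) = uu (k+1) - (y : V) := by abel
        rw [hc1]
        exact hy'
      have h2 : toDist (ω (c k - (op t • e + (y : V)))) ≤ r k := hnest k h1
      show toDist (ω (uu k - (y : V))) ≤ r k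
      have hc2 : uu k - (y : V) = (op t • e + uu k) - (op t • e + (y : V)) := by abel
      rw [hc2]
      refine le_trans (ultra ω hω3 _ (c k) _) (max_le ?_ h2)
      rw [omega_sub_comm ω hω3neg]
      exact hdk k
    obtain ⟨uf, huf⟩ := hMCU cu r hr hUnest
    have hufk : ∀ k, toDist (ω (uu k - (uf : V))) ≤ r k := fun k => Set.mem_iInter.mp huf k
    refine ⟨op t • e + (uf : V), Set.mem_iInter.mpr fun k => ?_⟩
    show toDist (ω (c k - (op t • e + (uf : V)))) ≤ r k
    refine le_trans (ultra ω hω3 _ (op t • e + uu k) _) (max_le (hdk k) ?_)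
    have hc3 : op t • e + uu k - (op t • e + (uf : V)) = uu k - (uf : V) := by abel
    rw [hc3]
    exact hufk k

/-- Let `K` be a skew field with a spherically complete valuation `ν`, let
`V` be a finite-dimensional right `K`-vector space, `m > 0`, and let `ω : V → ℝ ∪ {∞}`
satisfy conditions (1)–(3). Then `(V, d)` with `d(x,y) = 2^{-ω(x-y)}` satisfies (MC′). -/
theorem findim_MCprime {K V : Type*} [DivisionRing K]
    [AddCommGroup V] [Module Kᵐᵒᵖ V] [FiniteDimensional Kᵐᵒᵖ V]
    (ν : K → WithTop ℝ)
    (hν1 : ∀ x : K, ν x = ⊤ ↔ x = 0)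
    (hνmul : ∀ x y : K, ν (x * y) = ν x + ν y)
    (hνadd : ∀ x y : K, min (ν x) (ν y) ≤ ν (x + y))
    (hνsph : MCprime (fun x y : K => toDist (ν (x - y))))
    (m : ℝ) (hm : 0 < m)
    (ω : V → WithTop ℝ)
    (hω1 : ∀ x : V, ω x = ⊤ ↔ x = 0)
    (hω2 : ∀ (x : V) (l : K), ω (MulOpposite.op l • x) = ω x + (m : WithTop ℝ) * ν l)
    (hω3neg : ∀ x : V, ω (-x) = ω x)
    (hω3 : ∀ x y : V, min (ω x) (ω y) ≤ ω (x + y)) :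
    MCprime (fun x y : V => toDist (ω (x - y))) := by
  exact aux_findim (Module.finrank Kᵐᵒᵖ V) rfl ν hν1 hνsph m hm ω hω1 hω2 hω3neg hω3
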